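/- Let d ≥ 1, k ≥ 2, and let N be a quantum channel on d×d complex matrices, i.e. N(X) = Σᵢ Eᵢ X Eᵢ† for a finite family of d×d matrices Eᵢ with Σᵢ Eᵢ†Eᵢ = I. Let H be a Hermitian d^k×d^k matrix satisfying tr[H · ρ^{⊗k}] = tr[ρ^k] for every density matrix ρ on ℂ^d. If there exists a Hermitian-preserving ℂ-linear map D on d^k×d^k matrices (i.e. D(A†) = D(A)† for every A) such that tr[H · D(N^{⊗k}(ρ^{⊗k}))] = tr[ρ^k] for every density matrix ρ on ℂ^d, then N is bijective as a linear map on d×d matrices. (This is the 'only if' direction of the theorem: the k-th moment can be retrieved from noisy states only if the noise channel is invertible.) -/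

import Mathlib

open Matrix BigOperators ComplexOrder

/-- The Kronecker product `A₁ ⊗ ⋯ ⊗ A_k` of a family of `d × d` matrices. -/
noncomputable def kronMap {d k : ℕ} (A : Fin k → Matrix (Fin d) (Fin d) ℂ) :
    Matrix (Fin k → Fin d) (Fin k → Fin d) ℂ :=
  Matrix.of fun a b => ∏ j, A j (a j) (b j)

/-- The `k`-fold Kronecker power `ρ^{⊗k}`. -/
noncomputable def kronPow {d : ℕ} (ρ : Matrix (Fin d) (Fin d) ℂ) (k : ℕ) :
    Matrix (Fin k → Fin d) (Fin k → Fin d) ℂ :=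
  kronMap fun _ => ρ

lemma aux_trace_conjT {d : ℕ} (A : Matrix (Fin d) (Fin d) ℂ) :
    (Aᴴ * A).trace = ((∑ i, ∑ j, Complex.normSq (A i j) : ℝ) : ℂ) := by
  push_cast
  rw [Matrix.trace]
  simp only [Matrix.diag_apply, Matrix.mul_apply, Matrix.conjTranspose_apply]
  rw [Finset.sum_comm]
  refine Finset.sum_congr rfl fun i _ => Finset.sum_congr rfl fun j _ => ?_
  rw [Complex.normSq_eq_conj_mul_self]; rfl

lemma aux_herm_real {d : ℕ} {W : Matrix (Fin d) (Fin d) ℂ} (hW : W.IsHermitian)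
    (x : Fin d → ℂ) : ((star x ⬝ᵥ W *ᵥ x).re : ℂ) = star x ⬝ᵥ W *ᵥ x := by
  rw [Complex.conj_eq_iff_re.mp]
  calc star (star x ⬝ᵥ W *ᵥ x) = star (W *ᵥ x) ⬝ᵥ x := by rw [star_dotProduct, star_star]
    _ = (star x ᵥ* Wᴴ) ⬝ᵥ x := by rw [star_mulVec]
    _ = star x ⬝ᵥ W *ᵥ x := by rw [← dotProduct_mulVec, hW.eq]

lemma aux_psd {d : ℕ} {W : Matrix (Fin d) (Fin d) ℂ} (hW : W.IsHermitian) (t : ℝ)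
    (ht : |t| * (∑ i, ∑ j, ‖W i j‖) ≤ (d : ℝ)⁻¹) :
    (((d : ℂ))⁻¹ • (1 : Matrix (Fin d) (Fin d) ℂ) + (t : ℂ) • W).PosSemidef := by
  set M : ℝ := ∑ i, ∑ j, ‖W i j‖ with hM
  have hMnn : 0 ≤ M :=
    Finset.sum_nonneg fun i _ => Finset.sum_nonneg fun j _ => norm_nonneg _
  rw [Matrix.posSemidef_iff_dotProduct_mulVec]
  constructor
  · rw [Matrix.IsHermitian, conjTranspose_add, conjTranspose_smul, conjTranspose_smul,
      conjTranspose_one, hW.eq]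
    congr 1 <;> simp [Complex.star_def]
  · intro x
    set S : ℝ := ∑ i, Complex.normSq (x i) with hS
    have hSnn : 0 ≤ S := Finset.sum_nonneg fun i _ => Complex.normSq_nonneg _
    have hxx : star x ⬝ᵥ x = (S : ℂ) := by
      rw [hS, dotProduct]
      push_cast
      refine Finset.sum_congr rfl fun i _ => ?_
      rw [Complex.normSq_eq_conj_mul_self]; rfl
    have hval : star x ⬝ᵥ ((((d : ℂ))⁻¹ • 1 + (t : ℂ) • W) *ᵥ x)
        = ((d : ℂ))⁻¹ * (S : ℂ) + (t : ℂ) * (star x ⬝ᵥ W *ᵥ x) := by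
      rw [add_mulVec, smul_mulVec, smul_mulVec, one_mulVec, dotProduct_add,
        dotProduct_smul, dotProduct_smul, smul_eq_mul, smul_eq_mul, hxx]
    set q : ℂ := star x ⬝ᵥ W *ᵥ x with hq
    have hxi : ∀ i j, ‖x i‖ * ‖x j‖ ≤ S := by
      intro i j
      have h1 : Complex.normSq (x i) ≤ S :=
        Finset.single_le_sum (fun i _ => Complex.normSq_nonneg (x i)) (Finset.mem_univ i)
      have h2 : Complex.normSq (x j) ≤ S :=
        Finset.single_le_sum (fun i _ => Complex.normSq_nonneg (x i)) (Finset.mem_univ j)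
      rw [← Complex.sq_norm] at h1 h2
      nlinarith [norm_nonneg (x i), norm_nonneg (x j),
        sq_nonneg (‖x i‖ - ‖x j‖)]
    have hqb : ‖q‖ ≤ M * S := by
      have h1 : ‖q‖ ≤ ∑ i, ∑ j, ‖x i‖ * (‖W i j‖ * ‖x j‖) := by
        rw [hq, dotProduct]
        refine (norm_sum_le _ _).trans (Finset.sum_le_sum fun i _ => ?_)
        have e1 : ‖star x i * (W *ᵥ x) i‖
            = ‖x i‖ * ‖(W *ᵥ x) i‖ := by
          rw [norm_mul]
          simp [Pi.star_apply, Complex.norm_conj]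
        rw [e1]
        have e2 : ‖(W *ᵥ x) i‖ ≤ ∑ j, ‖W i j‖ * ‖x j‖ := by
          rw [mulVec, dotProduct]
          refine (norm_sum_le _ _).trans (le_of_eq ?_)
          exact Finset.sum_congr rfl fun j _ => norm_mul _ _
        calc ‖x i‖ * ‖(W *ᵥ x) i‖
            ≤ ‖x i‖ * ∑ j, ‖W i j‖ * ‖x j‖ :=
              mul_le_mul_of_nonneg_left e2 (norm_nonneg _)
          _ = ∑ j, ‖x i‖ * (‖W i j‖ * ‖x j‖) := by
              rw [Finset.mul_sum]
      refine h1.trans ?_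
      rw [hM, Finset.sum_mul]
      refine Finset.sum_le_sum fun i _ => ?_
      rw [Finset.sum_mul]
      refine Finset.sum_le_sum fun j _ => ?_
      calc ‖x i‖ * (‖W i j‖ * ‖x j‖)
          = ‖W i j‖ * (‖x i‖ * ‖x j‖) := by ring
        _ ≤ ‖W i j‖ * S :=
            mul_le_mul_of_nonneg_left (hxi i j) (norm_nonneg _)
    have hqre : q = ((q.re : ℝ) : ℂ) := (aux_herm_real hW x).symm
    rw [hval, hqre]
    have : ((d : ℂ))⁻¹ * (S : ℂ) + (t : ℂ) * ((q.re : ℝ) : ℂ)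
        = (((d : ℝ)⁻¹ * S + t * q.re : ℝ) : ℂ) := by push_cast; ring
    rw [this, Complex.zero_le_real]
    have hre : |q.re| ≤ M * S := (Complex.abs_re_le_norm q).trans hqb
    have h3 : |t| * M * S ≤ (d : ℝ)⁻¹ * S := mul_le_mul_of_nonneg_right ht hSnn
    have h4 : |t * q.re| ≤ |t| * (M * S) := by
      rw [abs_mul]; exact mul_le_mul_of_nonneg_left hre (abs_nonneg t)
    nlinarith [neg_abs_le (t * q.re)]

lemma aux_trace_pow {d k : ℕ} (a t : ℂ) (W : Matrix (Fin d) (Fin d) ℂ) :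
    ((a • (1 : Matrix (Fin d) (Fin d) ℂ) + t • W) ^ k).trace
      = ∑ p ∈ Finset.HasAntidiagonal.antidiagonal k,
          (k.choose p.1 : ℂ) * a ^ p.1 * (t ^ p.2 * (W ^ p.2).trace) := by
  have hc : Commute (a • (1 : Matrix (Fin d) (Fin d) ℂ)) (t • W) := by
    unfold Commute SemiconjBy
    rw [smul_mul_assoc, mul_smul_comm, smul_mul_assoc, mul_smul_comm, one_mul, mul_one,
      smul_smul, smul_smul, mul_comm]
  rw [hc.add_pow', Matrix.trace_sum]
  refine Finset.sum_congr rfl fun p _ => ?_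
  rw [smul_pow, smul_pow, one_pow, smul_mul_assoc, mul_smul_comm, one_mul, Matrix.trace_smul,
    Matrix.trace_smul]
  rw [Matrix.trace_smul, nsmul_eq_mul, smul_eq_mul, smul_eq_mul]
  ring

/-- 'only if' direction: let `N` be a quantum channel on `d × d` matrices with
Kraus operators `E i` (`N(X) = Σᵢ Eᵢ X Eᵢ†`, `Σᵢ Eᵢ†Eᵢ = I`), let `H` be a Hermitian
`d^k × d^k` matrix with `tr[H · ρ^{⊗k}] = tr[ρ^k]` for all density matrices `ρ`, and let `Nk`
be the `k`-fold tensor power `N^{⊗k}`.  If some Hermitian-preserving linear map `D` satisfies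
`tr[H · D(N^{⊗k}(ρ^{⊗k}))] = tr[ρ^k]` for every density matrix `ρ`, then `N` is bijective. -/
theorem channel_bijective_of_moment_retrievable (d k : ℕ) (hd : 1 ≤ d) (hk : 2 ≤ k)
    (N : Matrix (Fin d) (Fin d) ℂ →ₗ[ℂ] Matrix (Fin d) (Fin d) ℂ)
    (m : ℕ) (E : Fin m → Matrix (Fin d) (Fin d) ℂ)
    (hKraus : ∀ X, N X = ∑ i, E i * X * (E i)ᴴ)
    (hTP : ∑ i, (E i)ᴴ * E i = 1)
    (H : Matrix (Fin k → Fin d) (Fin k → Fin d) ℂ) (hH : H.IsHermitian)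
    (hmomH : ∀ ρ : Matrix (Fin d) (Fin d) ℂ, ρ.PosSemidef → ρ.trace = 1 →
      (H * kronPow ρ k).trace = (ρ ^ k).trace)
    (Nk D : Matrix (Fin k → Fin d) (Fin k → Fin d) ℂ →ₗ[ℂ]
      Matrix (Fin k → Fin d) (Fin k → Fin d) ℂ)
    (hNk : ∀ A : Fin k → Matrix (Fin d) (Fin d) ℂ,
      Nk (kronMap A) = kronMap fun j => N (A j))
    (hHP : ∀ A, D Aᴴ = (D A)ᴴ)
    (hret : ∀ ρ : Matrix (Fin d) (Fin d) ℂ, ρ.PosSemidef → ρ.trace = 1 →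
      (H * D (Nk (kronPow ρ k))).trace = (ρ ^ k).trace) :
    Function.Bijective ⇑N := by
  have hdC : (d : ℂ) ≠ 0 := Nat.cast_ne_zero.mpr (by omega)
  have hinj : Function.Injective ⇑N := by
    rw [injective_iff_map_eq_zero]
    intro X hX0
    by_contra hXne
    -- `N` is Hermitian-preserving
    have hNH : ∀ Y : Matrix (Fin d) (Fin d) ℂ, N Yᴴ = (N Y)ᴴ := by
      intro Y
      rw [hKraus, hKraus, Matrix.conjTranspose_sum]
      refine Finset.sum_congr rfl fun i _ => ?_
      rw [Matrix.conjTranspose_mul, Matrix.conjTranspose_mul,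
        Matrix.conjTranspose_conjTranspose, Matrix.mul_assoc]
    -- produce a nonzero Hermitian element of the kernel
    obtain ⟨W, hWH, hWne, hNW⟩ : ∃ W : Matrix (Fin d) (Fin d) ℂ,
        W.IsHermitian ∧ W ≠ 0 ∧ N W = 0 := by
      by_cases h1 : X + Xᴴ = 0
      · refine ⟨Complex.I • (X - Xᴴ), ?_, ?_, ?_⟩
        · rw [Matrix.IsHermitian, Matrix.conjTranspose_smul, Matrix.conjTranspose_sub,
            Matrix.conjTranspose_conjTranspose, Complex.star_def, Complex.conj_I]
          module
        · intro h
          apply hXne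
          have h2 : X - Xᴴ = 0 := by
            have h' := congrArg (fun A => (-Complex.I) • A) h
            simpa [smul_smul, Complex.I_mul_I] using h'
          have h3 : X = Xᴴ := sub_eq_zero.mp h2
          rw [← h3] at h1
          have h4 : (2 : ℂ) • X = 0 := by rw [two_smul]; exact h1
          rcases smul_eq_zero.mp h4 with h' | h'
          · norm_num at h'
          · exact h'
        · rw [LinearMap.map_smul, map_sub, hNH, hX0]
          simp
      · refine ⟨X + Xᴴ, ?_, h1, ?_⟩
        · rw [Matrix.IsHermitian, Matrix.conjTranspose_add,
            Matrix.conjTranspose_conjTranspose, add_comm]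
        · rw [map_add, hNH, hX0]
          simp
    -- `W` is traceless
    have htrW : W.trace = 0 := by
      have h1 : (N W).trace = W.trace := by
        rw [hKraus, Matrix.trace_sum]
        rw [Finset.sum_congr rfl fun i _ => Matrix.trace_mul_cycle (E i) W (E i)ᴴ]
        rw [← Matrix.trace_sum, ← Finset.sum_mul, hTP, Matrix.one_mul]
      rw [hNW, Matrix.trace_zero] at h1
      exact h1.symm
    -- set up the perturbation family
    set M : ℝ := ∑ i, ∑ j, ‖W i j‖ with hMdef
    have hMnn : 0 ≤ M :=
      Finset.sum_nonneg fun i _ => Finset.sum_nonneg fun j _ => norm_nonneg _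
    have hdR : (0 : ℝ) < d := by exact_mod_cast Nat.pos_of_ne_zero (by omega)
    obtain ⟨ε, hεpos, hbound⟩ : ∃ ε : ℝ, 0 < ε ∧
        ∀ t : ℝ, |t| ≤ ε → |t| * M ≤ (d : ℝ)⁻¹ := by
      refine ⟨(d : ℝ)⁻¹ / (M + 1), div_pos (inv_pos.mpr hdR) (by linarith), ?_⟩
      intro t htle
      calc |t| * M ≤ ((d : ℝ)⁻¹ / (M + 1)) * M := mul_le_mul_of_nonneg_right htle hMnn
        _ ≤ ((d : ℝ)⁻¹ / (M + 1)) * (M + 1) := by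
            have h0 : 0 < (d : ℝ)⁻¹ / (M + 1) := div_pos (inv_pos.mpr hdR) (by linarith)
            nlinarith
        _ = (d : ℝ)⁻¹ := by field_simp
    have hpsd : ∀ t : ℝ, |t| ≤ ε →
        (((d : ℂ))⁻¹ • (1 : Matrix (Fin d) (Fin d) ℂ) + ((t : ℝ) : ℂ) • W).PosSemidef :=
      fun t htle => aux_psd hWH t (hbound t htle)
    have htr1 : ∀ t : ℝ,
        (((d : ℂ))⁻¹ • (1 : Matrix (Fin d) (Fin d) ℂ) + ((t : ℝ) : ℂ) • W).trace = 1 := by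
      intro t
      rw [Matrix.trace_add, Matrix.trace_smul, Matrix.trace_smul, Matrix.trace_one, htrW,
        smul_zero, add_zero, smul_eq_mul]
      simp only [Fintype.card_fin]
      exact inv_mul_cancel₀ hdC
    have hNρ : ∀ t : ℝ,
        N (((d : ℂ))⁻¹ • (1 : Matrix (Fin d) (Fin d) ℂ) + ((t : ℝ) : ℂ) • W)
          = N (((d : ℂ))⁻¹ • (1 : Matrix (Fin d) (Fin d) ℂ) + (((0 : ℝ)) : ℂ) • W) := by
      intro t
      simp only [map_add, _root_.map_smul, hNW, smul_zero, add_zero]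
    have hkey : ∀ t : ℝ, |t| ≤ ε →
        ((((d : ℂ))⁻¹ • (1 : Matrix (Fin d) (Fin d) ℂ) + ((t : ℝ) : ℂ) • W) ^ k).trace
          = ((((d : ℂ))⁻¹ • (1 : Matrix (Fin d) (Fin d) ℂ) + (((0 : ℝ)) : ℂ) • W) ^ k).trace := by
      intro t htle
      have h0 : |(0 : ℝ)| ≤ ε := by simp [le_of_lt hεpos]
      have e1 := hret _ (hpsd t htle) (htr1 t)
      have e2 := hret _ (hpsd 0 h0) (htr1 0)
      rw [← e1, ← e2]
      have : Nk (kronPow (((d : ℂ))⁻¹ • 1 + ((t : ℝ) : ℂ) • W) k)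
          = Nk (kronPow (((d : ℂ))⁻¹ • 1 + (((0 : ℝ)) : ℂ) • W) k) := by
        simp only [kronPow, hNk]
        exact congrArg kronMap (funext fun _ => hNρ t)
      rw [this]
    -- nonnegativity of even-power traces
    have hTnn : ∀ l : ℕ, 0 ≤ (W ^ (l + l)).trace := by
      intro l
      have h : W ^ (l + l) = (W ^ l)ᴴ * (W ^ l) := by
        rw [(hWH.pow l).eq, ← pow_add]
      rw [h, aux_trace_conjT, Complex.zero_le_real]
      exact Finset.sum_nonneg fun i _ => Finset.sum_nonneg fun j _ => Complex.normSq_nonneg _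
    have hT2 : (W ^ 2).trace ≠ 0 := by
      have h : W ^ 2 = Wᴴ * W := by rw [hWH.eq, sq]
      rw [h, aux_trace_conjT]
      intro hcontr
      apply hWne
      have h0 : (∑ i, ∑ j, Complex.normSq (W i j) : ℝ) = 0 := by exact_mod_cast hcontr
      ext i j
      have h1 := (Finset.sum_eq_zero_iff_of_nonneg fun i _ =>
        Finset.sum_nonneg fun j _ => Complex.normSq_nonneg (W i j)).mp h0 i (Finset.mem_univ i)
      have h2 := (Finset.sum_eq_zero_iff_of_nonneg fun j _ =>
        Complex.normSq_nonneg (W i j)).mp h1 j (Finset.mem_univ j)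
      simpa using Complex.normSq_eq_zero.mp h2
    -- the sum identity
    have hsum : (∑ p ∈ Finset.HasAntidiagonal.antidiagonal k,
        (k.choose p.1 : ℂ) * ((d : ℂ)⁻¹) ^ p.1 *
          ((((ε : ℝ) : ℂ) ^ p.2 + (-((ε : ℝ) : ℂ)) ^ p.2 - 2 * (0 : ℂ) ^ p.2)
            * (W ^ p.2).trace)) = 0 := by
      have h1 := aux_trace_pow (k := k) ((d : ℂ))⁻¹ ((ε : ℝ) : ℂ) W
      have h2 := aux_trace_pow (k := k) ((d : ℂ))⁻¹ (((-ε : ℝ)) : ℂ) W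
      have h3 := aux_trace_pow (k := k) ((d : ℂ))⁻¹ (((0 : ℝ)) : ℂ) W
      have e1 := hkey ε (by rw [abs_of_pos hεpos])
      have e2 := hkey (-ε) (by rw [abs_neg, abs_of_pos hεpos])
      have hz : ((((d : ℂ))⁻¹ • (1 : Matrix (Fin d) (Fin d) ℂ) + ((ε : ℝ) : ℂ) • W) ^ k).trace
            + ((((d : ℂ))⁻¹ • (1 : Matrix (Fin d) (Fin d) ℂ) + (((-ε : ℝ)) : ℂ) • W) ^ k).trace
            - 2 * ((((d : ℂ))⁻¹ • (1 : Matrix (Fin d) (Fin d) ℂ)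
                + (((0 : ℝ)) : ℂ) • W) ^ k).trace = 0 := by
        rw [e1, e2]; ring
      rw [h1, h2, h3, Finset.mul_sum, ← Finset.sum_add_distrib, ← Finset.sum_sub_distrib] at hz
      refine Eq.trans (Finset.sum_congr rfl fun p _ => ?_) hz
      push_cast
      ring
    -- nonnegativity of each summand
    have hnn : ∀ p ∈ Finset.HasAntidiagonal.antidiagonal k,
        0 ≤ (k.choose p.1 : ℂ) * ((d : ℂ)⁻¹) ^ p.1 *
          ((((ε : ℝ) : ℂ) ^ p.2 + (-((ε : ℝ) : ℂ)) ^ p.2 - 2 * (0 : ℂ) ^ p.2)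
            * (W ^ p.2).trace) := by
      intro p _
      rcases Nat.even_or_odd p.2 with he | ho
      · rcases Nat.eq_zero_or_pos p.2 with h0 | hpos
        · rw [h0]
          norm_num
        · obtain ⟨l, hl⟩ := he
          have hfac : (((ε : ℝ) : ℂ)) ^ p.2 + (-((ε : ℝ) : ℂ)) ^ p.2 - 2 * (0 : ℂ) ^ p.2
              = 2 * (((ε : ℝ) : ℂ)) ^ p.2 := by
            rw [(Even.neg_pow ⟨l, hl⟩ (((ε : ℝ) : ℂ))), zero_pow (by omega)]
            ring
          rw [hfac]
          have hc1 : (0 : ℂ) ≤ (k.choose p.1 : ℂ) := by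
            rw [← Complex.ofReal_natCast, Complex.zero_le_real]
            positivity
          have hc2 : (0 : ℂ) ≤ ((d : ℂ)⁻¹) ^ p.1 := by
            have : ((d : ℂ)⁻¹) ^ p.1 = ((((d : ℝ)⁻¹) ^ p.1 : ℝ) : ℂ) := by push_cast; ring
            rw [this, Complex.zero_le_real]
            positivity
          have hc3 : (0 : ℂ) ≤ 2 * (((ε : ℝ) : ℂ)) ^ p.2 := by
            have : 2 * (((ε : ℝ) : ℂ)) ^ p.2 = (((2 * ε ^ p.2 : ℝ)) : ℂ) := by
              push_cast; ring
            rw [this, Complex.zero_le_real]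
            positivity
          have hc4 : (0 : ℂ) ≤ (W ^ p.2).trace := by
            rw [hl]; exact hTnn l
          exact mul_nonneg (mul_nonneg hc1 hc2) (mul_nonneg hc3 hc4)
      · have hfac : (((ε : ℝ) : ℂ)) ^ p.2 + (-((ε : ℝ) : ℂ)) ^ p.2 - 2 * (0 : ℂ) ^ p.2 = 0 := by
          rw [Odd.neg_pow ho, zero_pow ho.pos.ne']
          ring
        rw [hfac]
        simp
    -- conclude
    have hall := (Finset.sum_eq_zero_iff_of_nonneg hnn).mp hsum
    have hmem : ((k - 2 : ℕ), (2 : ℕ)) ∈ Finset.HasAntidiagonal.antidiagonal k := by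
      rw [Finset.HasAntidiagonal.mem_antidiagonal]
      omega
    have h5 := hall _ hmem
    have hfac : (((ε : ℝ) : ℂ)) ^ 2 + (-((ε : ℝ) : ℂ)) ^ 2 - 2 * (0 : ℂ) ^ 2
        = 2 * (((ε : ℝ) : ℂ)) ^ 2 := by ring
    rw [hfac] at h5
    have hchoose : (k.choose (k - 2) : ℂ) ≠ 0 :=
      Nat.cast_ne_zero.mpr (Nat.choose_pos (by omega)).ne'
    have hεne : (((ε : ℝ) : ℂ)) ≠ 0 := by
      exact_mod_cast hεpos.ne'
    apply hT2
    have := mul_eq_zero.mp h5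
    rcases this with h | h
    · exact absurd h (mul_ne_zero hchoose (pow_ne_zero _ (inv_ne_zero hdC)))
    · rcases mul_eq_zero.mp h with h' | h'
      · exact absurd h' (mul_ne_zero two_ne_zero (pow_ne_zero _ hεne))
      · exact h'
  exact ⟨hinj, LinearMap.injective_iff_surjective.mp hinj⟩
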